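/- The composita of the generating function of the Catalan numbers, F(x) = ∑_{m≥1} C_{m-1} x^m where C_m is the m-th Catalan number, is F^Δ(n,k) = (k/n)·C(2n−k−1, n−1). That is, ∑_{λ₁+...+λ_k=n, λᵢ>0} C_{λ₁−1}···C_{λ_k−1} = (k/n)·C(2n−k−1, n−1) for all 1 ≤ k ≤ n. -/

import Mathlib

open Finset BigOperators

/-- The compositae: sum over compositions of `n` into `k` positive parts
of products of `a`-values. -/
def compositae (a : ℕ → ℤ) (n k : ℕ) : ℤ :=
  ∑ l ∈ (Finset.Nat.antidiagonalTuple k n).filter (fun l => ∀ i, 0 < l i),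
    ∏ i, a (l i)

lemma compositae_zero (a : ℕ → ℤ) (n : ℕ) :
    compositae a n 0 = if n = 0 then 1 else 0 := by
  unfold compositae
  rcases n with _ | n <;> simp

lemma compositae_succ (a : ℕ → ℤ) (n k : ℕ) :
    compositae a n (k+1) = ∑ j ∈ Finset.Icc 1 n, a j * compositae a (n - j) k := by
  unfold compositae
  simp_rw [Finset.mul_sum]
  rw [Finset.sum_sigma']
  refine Finset.sum_bij' (fun l _ => (⟨l 0, Fin.tail l⟩ : Σ _ : ℕ, (Fin k → ℕ)))
    (fun p _ => Fin.cons p.1 p.2) ?_ ?_ ?_ ?_ ?_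
  · rintro l hl
    simp only [Finset.mem_filter, Finset.Nat.mem_antidiagonalTuple] at hl
    obtain ⟨hsum, hpos⟩ := hl
    simp only [Finset.mem_sigma, Finset.mem_Icc, Finset.mem_filter,
      Finset.Nat.mem_antidiagonalTuple]
    refine ⟨⟨hpos 0, ?_⟩, ?_, fun i => hpos i.succ⟩
    · exact hsum ▸ Finset.single_le_sum (fun i _ => Nat.zero_le (l i)) (Finset.mem_univ 0)
    · have := Fin.sum_univ_succ l
      rw [hsum] at this
      simp only [Fin.tail]
      omega
  · rintro ⟨j, l⟩ hp
    simp only [Finset.mem_sigma, Finset.mem_Icc, Finset.mem_filter,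
      Finset.Nat.mem_antidiagonalTuple] at hp
    obtain ⟨⟨hj1, hjn⟩, hsum, hpos⟩ := hp
    simp only [Finset.mem_filter, Finset.Nat.mem_antidiagonalTuple]
    constructor
    · rw [Fin.sum_univ_succ]
      simp only [Fin.cons_zero, Fin.cons_succ]
      omega
    · intro i
      refine Fin.cases ?_ ?_ i
      · simp only [Fin.cons_zero]; omega
      · intro i; simpa using hpos i
  · intro l hl
    exact Fin.cons_self_tail l
  · rintro ⟨j, l⟩ hp
    simp [Fin.tail_cons]
  · intro l hl
    rw [Fin.prod_univ_succ]
    simp [Fin.tail]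

lemma compositae_eq_zero (a : ℕ → ℤ) {n k : ℕ} (h : n < k) :
    compositae a n k = 0 := by
  induction k generalizing n with
  | zero => omega
  | succ k ih =>
    rw [compositae_succ]
    refine Finset.sum_eq_zero fun j hj => ?_
    simp only [Finset.mem_Icc] at hj
    rw [ih (by omega), mul_zero]

lemma compositae_one (a : ℕ → ℤ) {n : ℕ} (hn : 1 ≤ n) :
    compositae a n 1 = a n := by
  rw [compositae_succ]
  rw [Finset.sum_eq_single n]
  · rw [compositae_zero]; simp
  · intro j hj hjn
    simp only [Finset.mem_Icc] at hj
    rw [compositae_zero, if_neg (by omega), mul_zero]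
  · intro h
    exact absurd (Finset.mem_Icc.mpr ⟨hn, le_refl n⟩) h

lemma compositae_diag (a : ℕ → ℤ) (ha : a 1 = 1) (n : ℕ) :
    compositae a n n = 1 := by
  induction n with
  | zero => rw [compositae_zero]; simp
  | succ n ih =>
    rw [compositae_succ, Finset.sum_eq_single 1]
    · simpa [ha] using ih
    · intro j hj hj1
      simp only [Finset.mem_Icc] at hj
      rw [compositae_eq_zero a (by omega), mul_zero]
    · intro h
      exact absurd (Finset.mem_Icc.mpr ⟨le_refl 1, by omega⟩) h

/-- The shifted catalan sequence. -/
def cs : ℕ → ℤ := fun m => (catalan (m - 1) : ℤ)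

lemma cs_conv {j : ℕ} (hj : 2 ≤ j) :
    cs j = ∑ p ∈ Finset.Icc 1 (j-1), cs p * cs (j - p) := by
  obtain ⟨m, rfl⟩ : ∃ m, j = m + 2 := ⟨j - 2, by omega⟩
  have hI : Finset.Icc 1 (m + 2 - 1) = Finset.Ico 1 (m + 2) := by
    rw [show m + 2 = m + 1 + 1 from rfl, Finset.Ico_add_one_right_eq_Icc]
    norm_num
  rw [hI, Finset.sum_Ico_eq_sum_range]
  have : m + 2 - 1 = m + 1 := by omega
  rw [this]
  unfold cs
  have : catalan (m + 2 - 1) = ∑ i ∈ Finset.range (m+1), catalan i * catalan (m - i) := by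
    rw [show m + 2 - 1 = m + 1 from rfl, catalan_succ' m,
      Finset.Nat.sum_antidiagonal_eq_sum_range_succ_mk]
  rw [this]
  push_cast
  refine Finset.sum_congr rfl fun i hi => ?_
  simp only [Finset.mem_range] at hi
  have h1 : 1 + i - 1 = i := by omega
  have h2 : m + 2 - (1 + i) - 1 = m - i := by omega
  rw [h1, h2]

/-- The key functional-equation recurrence. -/
lemma compositae_cs_rec (n k : ℕ) (hn : 1 ≤ n) :
    compositae cs n (k+1) = compositae cs (n-1) k + compositae cs n (k+2) := by
  rw [compositae_succ]
  have hsplit : Finset.Icc 1 n = insert 1 (Finset.Icc 2 n) := (Finset.insert_Icc_add_one_left_eq_Icc hn).symm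
  rw [hsplit, Finset.sum_insert (by simp)]
  have h1 : cs 1 * compositae cs (n-1) k = compositae cs (n-1) k := by
    simp [cs]
  rw [h1]
  congr 1
  rw [compositae_succ]
  have hL : ∀ j ∈ Finset.Icc 2 n, cs j * compositae cs (n-j) k
      = ∑ p ∈ Finset.Icc 1 (j-1), cs p * cs (j-p) * compositae cs (n-j) k := by
    intro j hj
    simp only [Finset.mem_Icc] at hj
    rw [cs_conv hj.1, Finset.sum_mul]
  rw [Finset.sum_congr rfl hL]
  have hR : ∀ p ∈ Finset.Icc 1 n, cs p * compositae cs (n-p) (k+1)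
      = ∑ q ∈ Finset.Icc 1 (n-p), cs p * (cs q * compositae cs (n-p-q) k) := by
    intro p hp
    rw [compositae_succ, Finset.mul_sum]
  rw [Finset.sum_congr rfl hR]
  rw [Finset.sum_sigma', Finset.sum_sigma']
  refine Finset.sum_bij' (fun x _ => (⟨x.2, x.1 - x.2⟩ : Σ _ : ℕ, ℕ))
    (fun x _ => (⟨x.1 + x.2, x.1⟩ : Σ _ : ℕ, ℕ)) ?_ ?_ ?_ ?_ ?_
  · rintro ⟨j, p⟩ h
    simp only [Finset.mem_sigma, Finset.mem_Icc] at h ⊢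
    omega
  · rintro ⟨p, q⟩ h
    simp only [Finset.mem_sigma, Finset.mem_Icc] at h ⊢
    omega
  · rintro ⟨j, p⟩ h
    simp only [Finset.mem_sigma, Finset.mem_Icc] at h
    have : p + (j - p) = j := by omega
    simp [this]
  · rintro ⟨p, q⟩ h
    simp
  · rintro ⟨j, p⟩ h
    simp only [Finset.mem_sigma, Finset.mem_Icc] at h
    have : n - p - (j - p) = n - j := by omega
    rw [this, mul_assoc]


/-- The ballot-number closed form as difference of binomials. -/
def Bf (n k : ℕ) : ℤ := ((2*n-k-1).choose (n-1) : ℤ) - ((2*n-k-1).choose n : ℤ)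

lemma Bf_diag (n : ℕ) (hn : 1 ≤ n) : Bf n n = 1 := by
  unfold Bf
  rw [show 2*n-n-1 = n-1 from by omega, Nat.choose_self,
    Nat.choose_eq_zero_of_lt (by omega)]
  simp

lemma Bf_one (n : ℕ) (hn : 1 ≤ n) : Bf n 1 = (catalan (n-1) : ℤ) := by
  obtain ⟨m, rfl⟩ : ∃ m, n = m + 1 := ⟨n-1, by omega⟩
  unfold Bf
  rw [show 2*(m+1)-1-1 = 2*m from by omega, show m+1-1 = m from by omega]
  have hc : ((2*m).choose (m+1)) * (m+1) = ((2*m).choose m) * m := by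
    have := Nat.choose_succ_right_eq (2*m) m
    rwa [show 2*m - m = m from by omega] at this
  have hcat : (m+1) * catalan m = (2*m).choose m := by
    rw [succ_mul_catalan_eq_centralBinom, Nat.centralBinom]
  have hne : ((m:ℤ)+1) ≠ 0 := by positivity
  apply mul_left_cancel₀ hne
  have hcQ : ((2*m).choose (m+1) : ℤ) * (m+1) = ((2*m).choose m : ℤ) * m := by
    exact_mod_cast congrArg (Nat.cast : ℕ → ℤ) hc
  have hcatQ : ((m:ℤ)+1) * (catalan m : ℤ) = ((2*m).choose m : ℤ) := by
    exact_mod_cast congrArg (Nat.cast : ℕ → ℤ) hcat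
  rw [hcatQ]
  linarith [hcQ]

lemma Bf_rec (n k : ℕ) (h2 : 2 ≤ k) (hkn : k < n) :
    Bf n k = Bf (n-1) (k-1) + Bf n (k+1) := by
  unfold Bf
  rw [show 2*(n-1)-(k-1)-1 = 2*n-k-2 from by omega,
      show 2*n-(k+1)-1 = 2*n-k-2 from by omega,
      show n-1-1 = n-2 from by omega]
  obtain ⟨N, hN⟩ : ∃ N, 2*n-k-2 = N := ⟨_, rfl⟩
  obtain ⟨a, ha⟩ : ∃ a, n-2 = a := ⟨_, rfl⟩
  have e1 : 2*n-k-1 = N+1 := by omega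
  have e2 : n-1 = a+1 := by omega
  have e3 : n = a+2 := by omega
  rw [hN, e1, ha, e2, e3, Nat.choose_succ_succ N a, Nat.choose_succ_succ N (a+1)]
  push_cast
  ring

lemma compositae_cs_eq_Bf (m : ℕ) : ∀ n k, 1 ≤ k → k ≤ n → 2*n - k = m →
    compositae cs n k = Bf n k := by
  induction m using Nat.strong_induction_on with
  | _ m ih =>
    intro n k hk hkn hm
    rcases eq_or_lt_of_le hkn with rfl | hlt
    · rw [compositae_diag cs (by simp [cs]), Bf_diag k hk]
    · rcases eq_or_lt_of_le hk with rfl | hk2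
      · rw [compositae_one cs (by omega), Bf_one n (by omega)]
        rfl
      · obtain ⟨k', rfl⟩ : ∃ k', k = k'+1 := ⟨k-1, by omega⟩
        rw [compositae_cs_rec n k' (by omega),
          ih (2*(n-1)-k') (by omega) (n-1) k' (by omega) (by omega) rfl,
          ih (2*n-(k'+2)) (by omega) n (k'+2) (by omega) (by omega) rfl,
          Bf_rec n (k'+1) (by omega) hlt]
        norm_num

theorem stmt_14 (n k : ℕ) (hk : 1 ≤ k) (hkn : k ≤ n) :
    (compositae (fun m => (catalan (m - 1) : ℤ)) n k : ℚ)
      = (k : ℚ) / n * ((2 * n - k - 1).choose (n - 1) : ℚ) := by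
  have h := compositae_cs_eq_Bf (2*n-k) n k hk hkn rfl
  have hcs : (fun m => (catalan (m - 1) : ℤ)) = cs := rfl
  rw [hcs, h]
  unfold Bf
  have hn0 : (n:ℚ) ≠ 0 := Nat.cast_ne_zero.mpr (by omega)
  have key : (2*n-k-1).choose n * n = (2*n-k-1).choose (n-1) * (n-k) := by
    have := Nat.choose_succ_right_eq (2*n-k-1) (n-1)
    rwa [show n-1+1 = n from by omega, show 2*n-k-1-(n-1) = n-k from by omega] at this
  have keyQ : ((2*n-k-1).choose n : ℚ) * n = ((2*n-k-1).choose (n-1) : ℚ) * ((n:ℚ)-k) := by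
    have h2 := congrArg (Nat.cast : ℕ → ℚ) key
    push_cast [Nat.cast_sub hkn] at h2
    exact h2
  push_cast
  field_simp
  linarith [keyQ]
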